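/- If nonnegative e_t satisfies e_{t+1} ≤ (1 + γη₀KL/(t+1)) e_t + 2γη₀KG/(CS(t+1)) for t ≥ τ₀ ≥ 1 with e_{τ₀} = 0 and η₀ ≤ μ/(γK) for a constant μ > 0, then e_T ≤ (2G/(L·C·S))·(T/τ₀)^{μL}. -/

import Mathlib

lemma stmt9_key (x a c : ℝ) (hx : 1 ≤ x) (ha : 0 < a) (hca : c ≤ a) :
    1 + c / (x + 1) ≤ ((x + 1) / x) ^ a := by
  have hx0 : 0 < x := lt_of_lt_of_le one_pos hx
  have hx1 : 0 < x + 1 := by linarith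
  have hy : 0 < (x + 1) / x := by positivity
  rw [Real.rpow_def_of_pos hy, mul_comm]
  have hlog : 1 / (x + 1) ≤ Real.log ((x + 1) / x) := by
    have h := Real.log_le_sub_one_of_pos (show 0 < x / (x + 1) by positivity)
    have hinv : Real.log (x / (x + 1)) = - Real.log ((x + 1) / x) := by
      rw [Real.log_div (by positivity) (by positivity),
        Real.log_div (by positivity) (by positivity)]
      ring
    rw [hinv] at h
    have : x / (x + 1) - 1 = - (1 / (x + 1)) := by field_simp; ring
    linarith [this ▸ h]
  have h1 : a / (x + 1) ≤ a * Real.log ((x + 1) / x) := by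
    have := mul_le_mul_of_nonneg_left hlog ha.le
    calc a / (x + 1) = a * (1 / (x + 1)) := by ring
      _ ≤ _ := this
  have h2 : 1 + a / (x + 1) ≤ Real.exp (a / (x + 1)) := by
    have := Real.add_one_le_exp (a / (x + 1)); linarith
  have h3 : Real.exp (a / (x + 1)) ≤ Real.exp (a * Real.log ((x + 1) / x)) :=
    Real.exp_le_exp.mpr h1
  have h4 : c / (x + 1) ≤ a / (x + 1) := by gcongr
  linarith

theorem stmt_9 (γ η₀ L K G C S μ : ℝ) (τ₀ T : ℕ)
    (hγ : 1 ≤ γ) (hη₀ : 0 < η₀) (hL : 0 < L) (hK : 0 < K) (hG : 0 < G)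
    (hC : 0 < C) (hS : 0 < S) (hμ : 0 < μ) (hstep : η₀ ≤ μ / (γ * K))
    (hτ₀ : 1 ≤ τ₀) (hT : τ₀ ≤ T)
    (e : ℕ → ℝ) (he0 : e τ₀ = 0) (hnn : ∀ t, 0 ≤ e t)
    (hrec : ∀ t, τ₀ ≤ t →
      e (t + 1) ≤ (1 + γ * η₀ * K * L / ((t : ℝ) + 1)) * e t
                    + 2 * γ * η₀ * K * G / (C * S * ((t : ℝ) + 1))) :
    e T ≤ (2 * G / (L * C * S)) * ((T : ℝ) / (τ₀ : ℝ)) ^ (μ * L) := by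
  set a : ℝ := μ * L with ha_def
  set c : ℝ := γ * η₀ * K * L with hc_def
  set A : ℝ := 2 * G / (L * C * S) with hA_def
  have hγ0 : 0 < γ := lt_of_lt_of_le one_pos hγ
  have ha : 0 < a := by positivity
  have hA : 0 < A := by positivity
  have hc : 0 < c := by positivity
  have hca : c ≤ a := by
    have h1 : γ * K * η₀ ≤ μ := by
      rw [div_eq_mul_inv] at hstep
      calc γ * K * η₀ ≤ γ * K * (μ * (γ * K)⁻¹) := by
            apply mul_le_mul_of_nonneg_left hstep (by positivity)
        _ = μ := by field_simp
    calc c = (γ * K * η₀) * L := by rw [hc_def]; ring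
      _ ≤ μ * L := mul_le_mul_of_nonneg_right h1 hL.le
  have hτ0 : (0 : ℝ) < (τ₀ : ℝ) := by exact_mod_cast lt_of_lt_of_le one_pos hτ₀
  have hb : ∀ t : ℕ, τ₀ ≤ t →
      2 * γ * η₀ * K * G / (C * S * ((t : ℝ) + 1)) = A * c / ((t : ℝ) + 1) := by
    intro t ht
    rw [hA_def, hc_def]
    field_simp
  have main : ∀ t, τ₀ ≤ t → e t ≤ A * (((t : ℝ) / (τ₀ : ℝ)) ^ a - 1) := by
    intro t ht
    induction t, ht using Nat.le_induction with
    | base =>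
      rw [he0, div_self (ne_of_gt hτ0), Real.one_rpow]
      simp
    | succ t ht ih =>
      have hx : (1 : ℝ) ≤ (t : ℝ) := by exact_mod_cast le_trans hτ₀ ht
      have hx0 : (0 : ℝ) < (t : ℝ) := lt_of_lt_of_le one_pos hx
      have hx1 : (0 : ℝ) < (t : ℝ) + 1 := by linarith
      have hP : 0 < ((t : ℝ) / (τ₀ : ℝ)) ^ a := Real.rpow_pos_of_pos (by positivity) a
      have hfac : (0 : ℝ) ≤ 1 + c / ((t : ℝ) + 1) := by positivity
      have step1 := hrec t ht
      rw [hb t ht] at step1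
      have step2 : (1 + c / ((t : ℝ) + 1)) * e t + A * c / ((t : ℝ) + 1)
          ≤ (1 + c / ((t : ℝ) + 1)) * (A * (((t : ℝ) / (τ₀ : ℝ)) ^ a - 1))
            + A * c / ((t : ℝ) + 1) := by
        have := mul_le_mul_of_nonneg_left ih hfac
        linarith
      have eq1 : (1 + c / ((t : ℝ) + 1)) * (A * (((t : ℝ) / (τ₀ : ℝ)) ^ a - 1))
            + A * c / ((t : ℝ) + 1)
          = A * ((1 + c / ((t : ℝ) + 1)) * ((t : ℝ) / (τ₀ : ℝ)) ^ a - 1) := by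
        field_simp
        ring
      have hkey := stmt9_key (t : ℝ) a c hx ha hca
      have step3 : (1 + c / ((t : ℝ) + 1)) * ((t : ℝ) / (τ₀ : ℝ)) ^ a
          ≤ (((t : ℝ) + 1) / (t : ℝ)) ^ a * ((t : ℝ) / (τ₀ : ℝ)) ^ a :=
        mul_le_mul_of_nonneg_right hkey hP.le
      have eq2 : (((t : ℝ) + 1) / (t : ℝ)) ^ a * ((t : ℝ) / (τ₀ : ℝ)) ^ a
          = (((t : ℝ) + 1) / (τ₀ : ℝ)) ^ a := by
        rw [← Real.mul_rpow (by positivity) (by positivity)]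
        congr 1
        field_simp
      have cast1 : ((t + 1 : ℕ) : ℝ) = (t : ℝ) + 1 := by push_cast; ring
      rw [cast1]
      calc e (t + 1) ≤ (1 + c / ((t : ℝ) + 1)) * (A * (((t : ℝ) / (τ₀ : ℝ)) ^ a - 1))
            + A * c / ((t : ℝ) + 1) := le_trans step1 step2
        _ = A * ((1 + c / ((t : ℝ) + 1)) * ((t : ℝ) / (τ₀ : ℝ)) ^ a - 1) := eq1
        _ ≤ A * ((((t : ℝ) + 1) / (τ₀ : ℝ)) ^ a - 1) := by
            rw [← eq2]
            have := mul_le_mul_of_nonneg_left (sub_le_sub_right step3 1) hA.le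
            linarith
  calc e T ≤ A * (((T : ℝ) / (τ₀ : ℝ)) ^ a - 1) := main T hT
    _ ≤ A * ((T : ℝ) / (τ₀ : ℝ)) ^ a := by nlinarith [hA]
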